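/- Let f : ℕ → ℂ be a multiplicative function whose range is a finite set. Then the set of primes p such that |f(p^e)| > 1 for some integer e ≥ 1 is finite, and the set of primes p such that 0 < |f(p^e)| < 1 for some integer e ≥ 1 is finite. -/

import Mathlib

lemma fprod_aux (f : ℕ → ℂ)
    (hmul : ∀ m n : ℕ, Nat.Coprime m n → f (m * n) = f m * f n)
    (h1 : f 1 = 1) (s : Finset ℕ) (g : ℕ → ℕ)
    (h : ∀ a ∈ s, ∀ b ∈ s, a ≠ b → Nat.Coprime (g a) (g b)) :
    f (∏ p ∈ s, g p) = ∏ p ∈ s, f (g p) := by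
  induction s using Finset.induction_on with
  | empty => simpa using h1
  | @insert a s ha ih =>
    rw [Finset.prod_insert ha, Finset.prod_insert ha,
      hmul _ _ (Nat.Coprime.prod_right fun i hi => h a (by simp) i (by simp [hi])
        (by rintro rfl; exact ha hi)),
      ih (fun x hx y hy hxy => h x (by simp [hx]) y (by simp [hy]) hxy)]

theorem stmt_2 (f : ℕ → ℂ)
    (hmul : ∀ m n : ℕ, Nat.Coprime m n → f (m * n) = f m * f n)
    (hrange : (Set.range f).Finite) :
    {p : ℕ | p.Prime ∧ ∃ e : ℕ, 1 ≤ e ∧ 1 < ‖f (p ^ e)‖}.Finite ∧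
    {p : ℕ | p.Prime ∧ ∃ e : ℕ, 1 ≤ e ∧ 0 < ‖f (p ^ e)‖ ∧
      ‖f (p ^ e)‖ < 1}.Finite := by
  by_cases h1 : f 1 = 0
  · have hz : ∀ n : ℕ, f n = 0 := fun n => by
      have := hmul n 1 (Nat.coprime_one_right n)
      simpa [h1] using this
    constructor
    · convert Set.finite_empty
      ext p; simp [hz]
    · convert Set.finite_empty
      ext p; simp [hz]
  have h1' : f 1 = 1 := by
    have h := hmul 1 1 (Nat.coprime_one_right 1)
    rw [mul_one] at h
    exact (mul_right_cancel₀ h1 (by rw [← h, one_mul])).symm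
  -- finite set of moduli
  set V : Finset ℝ := (hrange.image (‖·‖)).toFinset with hV
  have hmem : ∀ n : ℕ, ‖f n‖ ∈ V := fun n => by
    simp [hV, Set.Finite.mem_toFinset]
  -- abs of f of product of coprime prime powers
  have key : ∀ (F : Finset ℕ) (e : ℕ → ℕ), (∀ p ∈ F, p.Prime) →
      ‖f (∏ p ∈ F, p ^ e p)‖ = ∏ p ∈ F, ‖f (p ^ e p)‖ := by
    intro F e hFp
    rw [fprod_aux f hmul h1' F (fun p => p ^ e p)
      (fun a ha b hb hab => (((Nat.coprime_primes (hFp a ha) (hFp b hb)).mpr hab)).pow _ _)]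
    exact norm_prod _ _
  constructor
  · by_contra hA
    replace hA : Set.Infinite _ := hA
    -- nonempty: get an element
    obtain ⟨p₀, hp₀⟩ := hA.nonempty
    obtain ⟨hp₀p, e₀, he₀1, he₀⟩ := hp₀
    have hVne : ((V.filter (fun v => 1 < v)).Nonempty) :=
      ⟨_, Finset.mem_filter.mpr ⟨hmem (p₀ ^ e₀), he₀⟩⟩
    set c := (V.filter (fun v => 1 < v)).min' hVne with hc
    have hc1 : 1 < c := (Finset.mem_filter.mp ((V.filter _).min'_mem hVne)).2
    have hcle : ∀ v ∈ V, 1 < v → c ≤ v := fun v hv h1v =>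
      Finset.min'_le _ v (Finset.mem_filter.mpr ⟨hv, h1v⟩)
    have hVn : V.Nonempty := ⟨_, hmem 1⟩
    set M := V.max' hVn with hM
    obtain ⟨n, hn⟩ := pow_unbounded_of_one_lt M hc1
    obtain ⟨F, hFA, hFcard⟩ := hA.exists_subset_card_eq n
    have hF : ∀ p ∈ F, ∃ k : ℕ, 1 ≤ k ∧ 1 < ‖f (p ^ k)‖ := fun p hp =>
      (hFA hp).2
    choose! e he1 he2 using hF
    have hFp : ∀ p ∈ F, p.Prime := fun p hp => (hFA hp).1
    have h1 := key F e hFp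
    have h2 : (c : ℝ) ^ n ≤ ∏ p ∈ F, ‖f (p ^ e p)‖ := by
      rw [← hFcard, ← Finset.prod_const]
      exact Finset.prod_le_prod (fun i _ => by positivity)
        (fun i hi => hcle _ (hmem _) (he2 i hi))
    have h3 : ‖f (∏ p ∈ F, p ^ e p)‖ ≤ M :=
      Finset.le_max' V _ (hmem _)
    linarith [h1 ▸ h3]
  · by_contra hB
    replace hB : Set.Infinite _ := hB
    obtain ⟨p₀, hp₀⟩ := hB.nonempty
    obtain ⟨hp₀p, e₀, he₀1, he₀0, he₀⟩ := hp₀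
    have hVne : ((V.filter (fun v => 0 < v ∧ v < 1)).Nonempty) :=
      ⟨_, Finset.mem_filter.mpr ⟨hmem (p₀ ^ e₀), he₀0, he₀⟩⟩
    set d := (V.filter (fun v => 0 < v ∧ v < 1)).max' hVne with hd
    have hd1 : d < 1 := (Finset.mem_filter.mp ((V.filter _).max'_mem hVne)).2.2
    have hd0 : 0 < d := (Finset.mem_filter.mp ((V.filter _).max'_mem hVne)).2.1
    have hdle : ∀ v ∈ V, 0 < v → v < 1 → v ≤ d := fun v hv h0v h1v =>
      Finset.le_max' _ v (Finset.mem_filter.mpr ⟨hv, h0v, h1v⟩)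
    have hVpne : ((V.filter (fun v => 0 < v)).Nonempty) :=
      ⟨_, Finset.mem_filter.mpr ⟨hmem (p₀ ^ e₀), he₀0⟩⟩
    set m := (V.filter (fun v => 0 < v)).min' hVpne with hm
    have hm0 : 0 < m := (Finset.mem_filter.mp ((V.filter _).min'_mem hVpne)).2
    have hmle : ∀ v ∈ V, 0 < v → m ≤ v := fun v hv h0v =>
      Finset.min'_le _ v (Finset.mem_filter.mpr ⟨hv, h0v⟩)
    obtain ⟨n, hn⟩ := exists_pow_lt_of_lt_one hm0 hd1
    obtain ⟨F, hFB, hFcard⟩ := hB.exists_subset_card_eq n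
    have hF : ∀ p ∈ F, ∃ k : ℕ, 1 ≤ k ∧ 0 < ‖f (p ^ k)‖ ∧
        ‖f (p ^ k)‖ < 1 := fun p hp => (hFB hp).2
    choose! e he1 he2 using hF
    have hFp : ∀ p ∈ F, p.Prime := fun p hp => (hFB hp).1
    have h1 := key F e hFp
    have h2 : ∏ p ∈ F, ‖f (p ^ e p)‖ ≤ d ^ n := by
      rw [← hFcard, ← Finset.prod_const]
      exact Finset.prod_le_prod (fun i hi => le_of_lt (he2 i hi).1)
        (fun i hi => hdle _ (hmem _) (he2 i hi).1 (he2 i hi).2)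
    have h4 : 0 < ∏ p ∈ F, ‖f (p ^ e p)‖ :=
      Finset.prod_pos (fun i hi => (he2 i hi).1)
    have h3 : m ≤ ‖f (∏ p ∈ F, p ^ e p)‖ :=
      hmle _ (hmem _) (h1 ▸ h4)
    linarith [h1 ▸ h3]
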